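/- An edge e of a signed graph that lies in at least one circle lies only in negative circles if and only if e is a balancing edge of the block containing it. -/

import Mathlib

open SimpleGraph Finset

variable {V : Type*} [DecidableEq V]

/-- The sign (product of edge signs) of a finite set of edges. -/
def esign (σ : Sym2 V → ℤˣ) (s : Finset (Sym2 V)) : ℤˣ := ∏ e ∈ s, σ e

/-- The sign of a walk: the product of the signs of its edges. -/
def wsign (σ : Sym2 V → ℤˣ) {G : SimpleGraph V} {u v : V} (w : G.Walk u v) : ℤˣ :=
  (w.edges.map σ).prod

/-- `s` is the edge set of a circle (cycle) of `G`. -/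
def IsCircleOf (G : SimpleGraph V) (s : Finset (Sym2 V)) : Prop :=
  ∃ (a : V) (w : G.Walk a a), w.IsCycle ∧ w.edges.toFinset = s

/-- The signature obtained from `σ` by switching with `ζ`. -/
def switchSign (σ : Sym2 V → ℤˣ) (ζ : V → ℤˣ) : Sym2 V → ℤˣ :=
  fun e => Sym2.lift ⟨fun a b => ζ a * σ s(a, b) * ζ b, by
    intro a b
    simp only []
    rw [Sym2.eq_swap]
    simp [mul_comm, mul_assoc, mul_left_comm]⟩ e

/-- `b` is a balancing edge: one can switch so that `b` is the unique negative edge. -/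
def IsBalancingEdge (G : SimpleGraph V) (σ : Sym2 V → ℤˣ) (b : Sym2 V) : Prop :=
  b ∈ G.edgeSet ∧ ∃ ζ : V → ℤˣ, ∀ f ∈ G.edgeSet, (switchSign σ ζ f = -1 ↔ f = b)

/-- `F` is the edge set of a bridge of the circle `w` in `G`: either a single
chord of `w`, or the edge set attached to a connected component of `G` minus
the vertices of `w`. -/
def IsBridgeOf {a : V} (G : SimpleGraph V) (w : G.Walk a a) (F : Set (Sym2 V)) : Prop :=
  (∃ x y : V, x ≠ y ∧ x ∈ w.support ∧ y ∈ w.support ∧ G.Adj x y ∧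
      s(x, y) ∉ w.edges ∧ F = {s(x, y)}) ∨
  (∃ D : Set V, D.Nonempty ∧ (∀ x ∈ D, x ∉ w.support) ∧ (G.induce D).Connected ∧
      (∀ x ∈ D, ∀ y : V, G.Adj x y → y ∈ D ∨ y ∈ w.support) ∧
      F = {e | e ∈ G.edgeSet ∧ ∃ x ∈ D, x ∈ e})

/-- The vertices of attachment of a bridge with edge set `F`. -/
def attachments {a : V} (G : SimpleGraph V) (w : G.Walk a a) (F : Set (Sym2 V)) : Set V :=
  {x | x ∈ w.support ∧ ∃ e ∈ F, x ∈ e}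

/-- A path through a bridge: a path between two distinct vertices of attachment
all of whose edges lie in the bridge. -/
def IsPathThrough {a : V} (G : SimpleGraph V) (w : G.Walk a a) (F : Set (Sym2 V))
    {x y : V} (Q : G.Walk x y) : Prop :=
  x ≠ y ∧ x ∈ attachments G w F ∧ y ∈ attachments G w F ∧ Q.IsPath ∧
    ∀ e ∈ Q.edges, e ∈ F

/-- `G` is a block: it is connected and has no cutpoint. -/
def IsBlock (G : SimpleGraph V) : Prop :=
  G.Connected ∧ ∀ v : V, ((⊤ : G.Subgraph).deleteVerts {v}).coe.Connected

/-- The block of `G` containing the edge `e`: its edges are `e` together with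
all edges lying on a common circle with `e`. -/
def blockOf (G : SimpleGraph V) (e : Sym2 V) : SimpleGraph V where
  Adj x y := G.Adj x y ∧ (s(x, y) = e ∨ ∃ s : Finset (Sym2 V),
    IsCircleOf G s ∧ e ∈ s ∧ s(x, y) ∈ s)
  symm := by
    constructor
    intro x y ⟨hadj, h⟩
    refine ⟨hadj.symm, ?_⟩
    rwa [Sym2.eq_swap]
  loopless := by
    constructor
    intro x ⟨hadj, _⟩
    exact G.loopless.irrefl x hadj

set_option linter.unusedSectionVars false
section Helpers

open SimpleGraph Walk

variable {V : Type*} [DecidableEq V] {G : SimpleGraph V} {σ : Sym2 V → ℤˣ}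

private lemma usq (u : ℤˣ) : u * u = 1 := Int.units_mul_self u

lemma wsign_nil {u : V} : wsign σ (Walk.nil : G.Walk u u) = 1 := rfl

lemma wsign_cons {u v w : V} (h : G.Adj u v) (p : G.Walk v w) :
    wsign σ (Walk.cons h p) = σ s(u, v) * wsign σ p := by
  simp [wsign]

lemma wsign_append {u v w : V} (p : G.Walk u v) (q : G.Walk v w) :
    wsign σ (p.append q) = wsign σ p * wsign σ q := by
  simp [wsign, Walk.edges_append]

lemma wsign_reverse {u v : V} (p : G.Walk u v) : wsign σ p.reverse = wsign σ p := by
  simp [wsign, Walk.edges_reverse, List.prod_reverse]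

lemma wsign_rotate {u v : V} (c : G.Walk v v) (h : u ∈ c.support) :
    wsign σ (c.rotate u h) = wsign σ c := by
  unfold wsign
  exact ((c.rotate_edges u h).perm.map σ).prod_eq

lemma esign_toFinset {u v : V} {p : G.Walk u v} (h : p.edges.Nodup) :
    esign σ p.edges.toFinset = wsign σ p :=
  List.prod_toFinset σ h

lemma switchSign_mk (ζ : V → ℤˣ) (x y : V) :
    switchSign σ ζ s(x, y) = ζ x * σ s(x, y) * ζ y := rfl

lemma path_first_edge {u v x : V} {p : G.Walk u v} (hp : p.IsPath) (hx : s(u, x) ∈ p.edges) :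
    ∃ (h : G.Adj u x) (q : G.Walk x v), p = Walk.cons h q := by
  cases p with
  | nil => simp at hx
  | cons h' p' =>
    rename_i w'
    rw [Walk.edges_cons, List.mem_cons] at hx
    rcases hx with hx | hx
    · obtain rfl : x = w' := Sym2.congr_right.mp hx
      exact ⟨h', p', rfl⟩
    · exact absurd (p'.fst_mem_support_of_mem_edges hx)
        ((Walk.cons_isPath_iff h' p').mp hp).2

lemma end_mem_support_tail {u v : V} (w : G.Walk u v) (hw : ¬w.Nil) : v ∈ w.support.tail := by
  obtain ⟨x, h, q, rfl⟩ := Walk.not_nil_iff.mp hw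
  rw [Walk.support_cons, List.tail_cons]
  exact q.end_mem_support

lemma mem_support_tail_closed {z x : V} (w : G.Walk z z) (hw : ¬w.Nil) (hx : x ∈ w.support) :
    x ∈ w.support.tail := by
  obtain ⟨y, h, q, rfl⟩ := Walk.not_nil_iff.mp hw
  rw [Walk.support_cons, List.tail_cons]
  rw [Walk.support_cons, List.mem_cons] at hx
  rcases hx with rfl | hx
  · exact q.end_mem_support
  · exact hx

lemma cycle_to_path {z a b : V} {w : G.Walk z z} (hw : w.IsCycle) (he : s(a, b) ∈ w.edges) :
    ∃ p : G.Walk a b, p.IsPath ∧ s(a, b) ∉ p.edges ∧ (∀ f ∈ p.edges, f ∈ w.edges) ∧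
      (∀ f ∈ w.edges, f ≠ s(a, b) → f ∈ p.edges) := by
  have ha : a ∈ w.support := w.fst_mem_support_of_mem_edges he
  have hperm : List.Perm (w.rotate a ha).edges w.edges := (w.rotate_edges a ha).perm
  have hd : (w.rotate a ha).IsCycle := hw.rotate ha
  have hed : s(a, b) ∈ (w.rotate a ha).edges := hperm.mem_iff.mpr he
  suffices h : ∃ p : G.Walk a b, p.IsPath ∧ s(a, b) ∉ p.edges ∧
      (∀ f ∈ p.edges, f ∈ (w.rotate a ha).edges) ∧
      (∀ f ∈ (w.rotate a ha).edges, f ≠ s(a, b) → f ∈ p.edges) by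
    obtain ⟨p, h1, h2, h3, h4⟩ := h
    exact ⟨p, h1, h2, fun f hf => hperm.mem_iff.mp (h3 f hf),
      fun f hf hne => h4 f (hperm.mem_iff.mpr hf) hne⟩
  obtain ⟨c, hac, q, hq⟩ := Walk.not_nil_iff.mp hd.not_nil
  rw [hq] at hd hed ⊢
  have hqp := (Walk.cons_isCycle_iff q hac).mp hd
  by_cases hfirst : s(a, b) = s(a, c)
  · obtain rfl : b = c := Sym2.congr_right.mp hfirst
    refine ⟨q.reverse, hqp.1.reverse, ?_, ?_, ?_⟩
    · rw [Walk.edges_reverse, List.mem_reverse]; exact hqp.2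
    · intro f hf
      rw [Walk.edges_reverse, List.mem_reverse] at hf
      rw [Walk.edges_cons]
      exact List.mem_cons_of_mem _ hf
    · intro f hf hne
      rw [Walk.edges_cons, List.mem_cons] at hf
      rcases hf with rfl | hf
      · exact absurd rfl hne
      · rw [Walk.edges_reverse, List.mem_reverse]; exact hf
  · have hbq : s(a, b) ∈ q.edges := by
      rw [Walk.edges_cons, List.mem_cons] at hed
      tauto
    have hrev : s(a, b) ∈ q.reverse.edges := by
      rw [Walk.edges_reverse, List.mem_reverse]; exact hbq
    obtain ⟨h2, q2, hq2⟩ := path_first_edge hqp.1.reverse hrev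
    have hq2p : q2.IsPath ∧ a ∉ q2.support := by
      have hh := hqp.1.reverse
      rw [hq2] at hh
      exact ⟨((Walk.cons_isPath_iff _ _).mp hh).1, ((Walk.cons_isPath_iff _ _).mp hh).2⟩
    have hq2e : s(a, b) ∉ q2.edges := by
      have hh : q.reverse.edges.Nodup := hqp.1.reverse.isTrail.edges_nodup
      rw [hq2, Walk.edges_cons] at hh
      exact (List.nodup_cons.mp hh).1
    refine ⟨Walk.cons hac q2.reverse, ?_, ?_, ?_, ?_⟩
    · exact (hq2p.1.reverse).cons
        (by rw [Walk.support_reverse, List.mem_reverse]; exact hq2p.2)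
    · rw [Walk.edges_cons, List.mem_cons]
      rintro (h | h)
      · exact hfirst h
      · rw [Walk.edges_reverse, List.mem_reverse] at h
        exact hq2e h
    · intro f hf
      rw [Walk.edges_cons, List.mem_cons] at hf
      rw [Walk.edges_cons, List.mem_cons]
      rcases hf with rfl | hf
      · exact Or.inl rfl
      · rw [Walk.edges_reverse, List.mem_reverse] at hf
        have : f ∈ q.reverse.edges := by rw [hq2, Walk.edges_cons]; exact List.mem_cons_of_mem _ hf
        rw [Walk.edges_reverse, List.mem_reverse] at this
        exact Or.inr this
    · intro f hf hne
      rw [Walk.edges_cons, List.mem_cons] at hf ⊢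
      rcases hf with rfl | hf
      · exact Or.inl rfl
      · have : f ∈ q.reverse.edges := by rw [Walk.edges_reverse, List.mem_reverse]; exact hf
        rw [hq2, Walk.edges_cons, List.mem_cons] at this
        rcases this with rfl | this
        · exact absurd rfl hne
        · refine Or.inr ?_
          rw [Walk.edges_reverse, List.mem_reverse]
          exact this

lemma exists_split_first {u v : V} (p : G.Walk u v) (P : V → Prop) (h : ∃ x ∈ p.support, P x) :
    ∃ (x : V) (q : G.Walk u x) (r : G.Walk x v), P x ∧ p = q.append r ∧
      ∀ y ∈ q.support, P y → y = x := by
  classical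
  induction p with
  | nil =>
    obtain ⟨x, hx, hPx⟩ := h
    rw [Walk.support_nil, List.mem_singleton] at hx
    subst hx
    exact ⟨x, Walk.nil, Walk.nil, hPx, rfl, by simp⟩
  | cons h' p' ih =>
    rename_i u w' v
    by_cases hPu : P u
    · refine ⟨u, Walk.nil, Walk.cons h' p', hPu, rfl, ?_⟩
      intro y hy _
      simpa using hy
    · have h2 : ∃ x ∈ p'.support, P x := by
        obtain ⟨x, hx, hPx⟩ := h
        rw [Walk.support_cons, List.mem_cons] at hx
        rcases hx with rfl | hx
        · exact absurd hPx hPu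
        · exact ⟨x, hx, hPx⟩
      obtain ⟨x, q, r, hPx, heq, hq⟩ := ih h2
      refine ⟨x, Walk.cons h' q, r, hPx, by rw [Walk.cons_append, ← heq], ?_⟩
      intro y hy hPy
      rw [Walk.support_cons, List.mem_cons] at hy
      rcases hy with rfl | hy
      · exact absurd hPy hPu
      · exact hq y hy hPy

lemma exists_split_last {u v : V} (p : G.Walk u v) (P : V → Prop) (h : ∃ x ∈ p.support, P x) :
    ∃ (x : V) (q : G.Walk u x) (r : G.Walk x v), P x ∧ p = q.append r ∧
      ∀ y ∈ r.support, P y → y = x := by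
  obtain ⟨x, q, r, hPx, heq, hq⟩ := exists_split_first p.reverse P
    (by obtain ⟨x, hx, hPx⟩ := h
        exact ⟨x, by rwa [Walk.support_reverse, List.mem_reverse], hPx⟩)
  refine ⟨x, r.reverse, q.reverse, hPx, ?_, ?_⟩
  · have h2 := congrArg Walk.reverse heq
    rwa [Walk.reverse_reverse, Walk.reverse_append] at h2
  · intro y hy hPy
    exact hq y (by rwa [Walk.support_reverse, List.mem_reverse] at hy) hPy

private lemma units_aux1 (s q1 q2 a1 a2 : ℤˣ) :
    (s * (q1 * (a1 * q2))) * (s * (q1 * (a2 * q2))) = a1 * a2 := by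
  have h : (s * (q1 * (a1 * q2))) * (s * (q1 * (a2 * q2)))
      = (s * s) * ((q1 * q1) * ((q2 * q2) * (a1 * a2))) := by
    refine Units.ext ?_
    simp only [Units.val_mul]
    ring
  rw [h, usq, usq, usq, one_mul, one_mul, one_mul]

end Helpers
section Core

open SimpleGraph Walk

set_option linter.unusedSectionVars false

variable {V : Type*} [DecidableEq V] {G : SimpleGraph V} {σ : Sym2 V → ℤˣ}

lemma closed_walk_wsign {G : SimpleGraph V} {σ : Sym2 V → ℤˣ}
    (hcyc : ∀ (x : V) (c : G.Walk x x), c.IsCycle → wsign σ c = 1) :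
    ∀ (n : ℕ) (u : V) (w : G.Walk u u), w.length ≤ n → wsign σ w = 1 := by
  intro n
  induction n with
  | zero =>
    intro u w hw
    have he : w.edges = [] := List.length_eq_zero_iff.mp (by rw [Walk.length_edges]; omega)
    simp [wsign, he]
  | succ n ih =>
    intro u w hw
    by_cases h0 : w.Nil
    · have hl : w.length = 0 := Walk.nil_iff_length_eq.mp h0
      have he : w.edges = [] := List.length_eq_zero_iff.mp (by rw [Walk.length_edges]; omega)
      simp [wsign, he]
    by_cases hnd : w.support.tail.Nodup
    · obtain ⟨v, hadj, q, rfl⟩ := Walk.not_nil_iff.mp h0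
      have hq_nodup : q.support.Nodup := by rwa [Walk.support_cons, List.tail_cons] at hnd
      have hq_path : q.IsPath := (Walk.isPath_def q).mpr hq_nodup
      by_cases hm : s(u, v) ∈ q.edges
      · have hrev : s(u, v) ∈ q.reverse.edges := by
          rw [Walk.edges_reverse, List.mem_reverse]; exact hm
        obtain ⟨h2, q2, hq2⟩ := path_first_edge hq_path.reverse hrev
        have hlen : q.length = q2.length + 1 := by
          have h3 := congrArg Walk.length hq2
          rwa [Walk.length_reverse, Walk.length_cons] at h3
        have hw2 : wsign σ (Walk.cons hadj q) = wsign σ q2 := by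
          rw [wsign_cons, ← wsign_reverse q, hq2, wsign_cons, ← mul_assoc,
            Int.units_mul_self, one_mul]
        rw [hw2]
        refine ih v q2 ?_
        rw [Walk.length_cons] at hw
        omega
      · exact hcyc u _ ((Walk.cons_isCycle_iff q hadj).mpr ⟨hq_path, hm⟩)
    · obtain ⟨x, hx2⟩ : ∃ x, 2 ≤ w.support.tail.count x := by
        by_contra hc
        push_neg at hc
        exact hnd (List.nodup_iff_count_le_one.mpr fun a => by have := hc a; omega)
      have hxt : x ∈ w.support.tail := by
        have : 0 < w.support.tail.count x := by omega
        exact List.count_pos_iff.mp this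
      have hxs : x ∈ w.support := List.mem_of_mem_tail hxt
      have hsign := wsign_rotate (σ := σ) w hxs
      have hlenr : (w.rotate x hxs).length = w.length := by
        have h3 := congrArg Walk.length (w.take_spec hxs)
        rw [Walk.length_append] at h3
        rw [Walk.rotate, Walk.length_append]
        omega
      have hcnt : 2 ≤ (w.rotate x hxs).support.tail.count x := by
        rw [List.Perm.count_eq (w.support_rotate x hxs).perm]
        exact hx2
      have hnil : ¬(w.rotate x hxs).Nil := by
        rw [Walk.nil_iff_length_eq, hlenr]
        rw [Walk.nil_iff_length_eq] at h0
        exact h0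
      obtain ⟨y, hadj, q, hqe⟩ := Walk.not_nil_iff.mp hnil
      have hcq : 2 ≤ q.support.count x := by
        rw [hqe, Walk.support_cons, List.tail_cons] at hcnt
        exact hcnt
      have hxq : x ∈ q.support := List.count_pos_iff.mp (by omega)
      have hts := q.take_spec hxq
      have hlens : (q.takeUntil x hxq).length + (q.dropUntil x hxq).length = q.length := by
        have h3 := congrArg Walk.length hts
        rwa [Walk.length_append] at h3
      have ht2len : (q.dropUntil x hxq).length ≠ 0 := by
        intro hz
        have h2 : q.dropUntil x hxq = Walk.nil := (Walk.nil_iff_length_eq.mpr hz).eq_nil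
        have h3 : q = q.takeUntil x hxq := by
          conv_lhs => rw [← hts]
          rw [h2, Walk.append_nil]
        have hcount1 := q.count_support_takeUntil_eq_one hxq
        rw [← h3] at hcount1
        omega
      have hqlen : q.length + 1 = w.length := by
        have h3 := congrArg Walk.length hqe
        rw [Walk.length_cons] at h3
        omega
      have e1 : wsign σ (Walk.cons hadj (q.takeUntil x hxq)) = 1 := by
        refine ih x _ ?_
        rw [Walk.length_cons]
        omega
      have e2 : wsign σ (q.dropUntil x hxq) = 1 := by
        refine ih x _ ?_
        omega
      calc wsign σ w = wsign σ (w.rotate x hxs) := hsign.symm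
        _ = wsign σ (Walk.cons hadj q) := by rw [hqe]
        _ = σ s(x, y) * (wsign σ (q.takeUntil x hxq) * wsign σ (q.dropUntil x hxq)) := by
            rw [wsign_cons, ← wsign_append, hts]
        _ = wsign σ (Walk.cons hadj (q.takeUntil x hxq)) * wsign σ (q.dropUntil x hxq) := by
            rw [wsign_cons, mul_assoc]
        _ = 1 := by rw [e1, e2, one_mul]

lemma wsign_unique {G : SimpleGraph V} {σ : Sym2 V → ℤˣ}
    (hcyc : ∀ (x : V) (c : G.Walk x x), c.IsCycle → wsign σ c = 1)
    {u v : V} (p q : G.Walk u v) : wsign σ p = wsign σ q := by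
  have h := closed_walk_wsign hcyc (p.append q.reverse).length u (p.append q.reverse) le_rfl
  rw [wsign_append, wsign_reverse] at h
  calc wsign σ p = wsign σ p * (wsign σ q * wsign σ q) := by
        rw [Int.units_mul_self, mul_one]
    _ = (wsign σ p * wsign σ q) * wsign σ q := by rw [mul_assoc]
    _ = wsign σ q := by rw [h, one_mul]

lemma lemA {G : SimpleGraph V} {σ : Sym2 V → ℤˣ} {a b : V}
    (hNeg : ∀ s, IsCircleOf G s → s(a, b) ∈ s → esign σ s = -1)
    {z : V} {c : G.Walk z z} (hc : c.IsCycle) (hce : s(a, b) ∉ c.edges)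
    {f : Sym2 V} (hf : f ∈ c.edges)
    {z' : V} {d : G.Walk z' z'} (hd : d.IsCycle) (hed : s(a, b) ∈ d.edges) (hfd : f ∈ d.edges) :
    wsign σ c = 1 := by
  have hab : G.Adj a b := d.adj_of_mem_edges hed
  obtain ⟨p, hp_path, hpe, hp_sub, hp_cov⟩ := cycle_to_path hd hed
  have hfe : f ≠ s(a, b) := fun h => hce (h ▸ hf)
  have hfp : f ∈ p.edges := hp_cov f hfd hfe
  clear hfd hp_sub
  revert hf hfe hfp
  induction f using Sym2.ind with
  | _ v1 v2 =>
  intro hf hfe hfp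
  have hv12 : v1 ≠ v2 := (c.adj_of_mem_edges hf).ne
  have hv1c : v1 ∈ c.support := c.fst_mem_support_of_mem_edges hf
  have hv2c : v2 ∈ c.support := c.snd_mem_support_of_mem_edges hf
  have hv1p : v1 ∈ p.support := p.fst_mem_support_of_mem_edges hfp
  have hv2p : v2 ∈ p.support := p.snd_mem_support_of_mem_edges hfp
  obtain ⟨x, q1, r1, hxC, hp1, hq1P⟩ :=
    exists_split_first p (· ∈ c.support) ⟨v1, hv1p, hv1c⟩
  obtain ⟨y, r2, q2, hyC, hr1, hq2P⟩ :=
    exists_split_last r1 (· ∈ c.support) ⟨x, r1.start_mem_support, hxC⟩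
  have hp2 : p = q1.append (r2.append q2) := by rw [hp1, hr1]
  have hpsup : p.support = q1.support ++ (r2.support.tail ++ q2.support.tail) := by
    rw [hp2, Walk.support_append, Walk.tail_support_append]
  have hnd : p.support.Nodup := hp_path.support_nodup
  rw [hpsup] at hnd
  obtain ⟨hq1nd, hrest_nd, hdisj1⟩ := List.nodup_append.mp hnd
  obtain ⟨hr2tnd, hq2tnd, hdisj2⟩ := List.nodup_append.mp hrest_nd
  have hq1path : q1.IsPath := (Walk.isPath_def q1).mpr hq1nd
  -- x ≠ y
  have hxy : x ≠ y := by
    rintro rfl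
    have hr2nil : r2.support.tail = [] := by
      by_contra hne
      have hnn : ¬r2.Nil := by
        intro hnil
        rw [Walk.nil_iff_support_eq] at hnil
        rw [hnil] at hne
        exact hne rfl
      have hx1 : x ∈ r2.support.tail := end_mem_support_tail r2 hnn
      exact hdisj1 _ q1.end_mem_support _ (List.mem_append_left _ hx1) rfl
    have hall : ∀ t, t ∈ p.support → t ∈ c.support → t = x := by
      intro t ht htc
      rw [hpsup, hr2nil, List.nil_append, List.mem_append] at ht
      rcases ht with ht | ht
      · exact hq1P t ht htc
      · exact hq2P t (List.mem_of_mem_tail ht) htc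
    exact hv12 ((hall v1 hv1p hv1c).trans (hall v2 hv2p hv2c).symm)
  have hq2path : q2.IsPath := by
    rw [Walk.isPath_def, q2.support_eq_cons]
    refine List.nodup_cons.mpr ⟨?_, hq2tnd⟩
    intro hy'
    by_cases hr2 : r2.Nil
    · exact hxy hr2.eq
    · exact hdisj2 _ (end_mem_support_tail r2 hr2) _ hy' rfl
  -- rotate c at x
  have hcnil : ¬c.Nil := hc.not_nil
  have hyct : y ∈ c.support.tail := mem_support_tail_closed c hcnil hyC
  have hc'cyc : (c.rotate x hxC).IsCycle := hc.rotate hxC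
  have hyc' : y ∈ (c.rotate x hxC).support := by
    refine List.mem_of_mem_tail ?_
    exact ((c.support_rotate x hxC).perm.mem_iff).mpr hyct
  set c' := c.rotate x hxC with hc'def
  have harc := c'.take_spec hyc'
  set A1 := c'.takeUntil y hyc' with hA1def
  set A2 := c'.dropUntil y hyc' with hA2def
  have hsupc' : c'.support = A1.support ++ A2.support.tail := by
    rw [← harc, Walk.support_append]
  have hTnd : c'.support.tail.Nodup := hc'cyc.support_nodup
  have htailc' : c'.support.tail = A1.support.tail ++ A2.support.tail := by
    have h3 : c'.support.tail = (A1.support ++ A2.support.tail).tail := by rw [← hsupc']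
    rw [A1.support_eq_cons, List.cons_append, List.tail_cons] at h3
    exact h3
  rw [htailc'] at hTnd
  obtain ⟨hA1tnd, hA2tnd, hdisjA⟩ := List.nodup_append.mp hTnd
  have hA1nn : ¬A1.Nil := Walk.not_nil_of_ne hxy
  have hA2nn : ¬A2.Nil := Walk.not_nil_of_ne (Ne.symm hxy)
  have hyA1t : y ∈ A1.support.tail := end_mem_support_tail A1 hA1nn
  have hxA2t : x ∈ A2.support.tail := end_mem_support_tail A2 hA2nn
  have hA1path : A1.IsPath := by
    rw [Walk.isPath_def, A1.support_eq_cons]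
    exact List.nodup_cons.mpr ⟨fun hx => hdisjA _ hx _ hxA2t rfl, hA1tnd⟩
  have hA2path : A2.IsPath := by
    rw [Walk.isPath_def, A2.support_eq_cons]
    exact List.nodup_cons.mpr ⟨fun hy' => hdisjA _ hyA1t _ hy' rfl, hA2tnd⟩
  have hc'sub : ∀ t ∈ c'.support, t ∈ c.support := by
    intro t ht
    rw [c'.support_eq_cons, List.mem_cons] at ht
    rcases ht with rfl | ht
    · exact hxC
    · exact List.mem_of_mem_tail (((c.support_rotate x hxC).perm.mem_iff).mp ht)
  have hA1sub : ∀ t ∈ A1.support, t ∈ c.support := fun t ht =>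
    hc'sub t (c'.support_takeUntil_subset hyc' ht)
  have hA2sub : ∀ t ∈ A2.support, t ∈ c.support := fun t ht =>
    hc'sub t (c'.support_dropUntil_subset hyc' ht)
  have hA1e : ∀ g ∈ A1.edges, g ∈ c.edges := fun g hg =>
    ((c.rotate_edges x hxC).perm.mem_iff).mp (c'.edges_takeUntil_subset hyc' hg)
  have hA2e : ∀ g ∈ A2.edges, g ∈ c.edges := fun g hg =>
    ((c.rotate_edges x hxC).perm.mem_iff).mp (c'.edges_dropUntil_subset hyc' hg)
  have hA1ne : s(a, b) ∉ A1.edges := fun h => hce (hA1e _ h)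
  have hA2ne : s(a, b) ∉ A2.edges := fun h => hce (hA2e _ h)
  have hq1e : ∀ g ∈ q1.edges, g ∈ p.edges := by
    intro g hg
    rw [hp1, Walk.edges_append]
    exact List.mem_append_left _ hg
  have hq2e : ∀ g ∈ q2.edges, g ∈ p.edges := by
    intro g hg
    rw [hp2, Walk.edges_append, Walk.edges_append]
    exact List.mem_append_right _ (List.mem_append_right _ hg)
  have hy_q2 : y ∉ q2.support.tail := by
    have h3 := (Walk.isPath_def q2).mp hq2path
    rw [q2.support_eq_cons] at h3
    exact (List.nodup_cons.mp h3).1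
  -- the generic cycle-through-e construction
  have mk : ∀ (arc : G.Walk x y), arc.IsPath → (∀ t ∈ arc.support, t ∈ c.support) →
      s(a, b) ∉ arc.edges →
      σ s(b, a) * (wsign σ q1 * (wsign σ arc * wsign σ q2)) = -1 := by
    intro arc harcP harcS harcE
    have harc_head : x ∉ arc.support.tail := by
      have h3 := (Walk.isPath_def arc).mp harcP
      rw [arc.support_eq_cons] at h3
      exact (List.nodup_cons.mp h3).1
    have harc_tnd : arc.support.tail.Nodup := by
      have h3 := (Walk.isPath_def arc).mp harcP
      rw [arc.support_eq_cons] at h3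
      exact (List.nodup_cons.mp h3).2
    have hPpath : (q1.append (arc.append q2)).IsPath := by
      rw [Walk.isPath_def, Walk.support_append, Walk.tail_support_append, List.nodup_append]
      refine ⟨hq1nd, ?_, ?_⟩
      · rw [List.nodup_append]
        refine ⟨harc_tnd, hq2tnd, ?_⟩
        intro t ht1 t' ht2 htt'
        subst htt'
        have htc : t ∈ c.support := harcS t (List.mem_of_mem_tail ht1)
        have hty : t = y := hq2P t (List.mem_of_mem_tail ht2) htc
        subst hty
        exact hy_q2 ht2
      · intro t ht1 t' ht2 htt'
        subst htt'
        rw [List.mem_append] at ht2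
        rcases ht2 with ht2 | ht2
        · have htc : t ∈ c.support := harcS t (List.mem_of_mem_tail ht2)
          have htx : t = x := hq1P t ht1 htc
          subst htx
          exact harc_head ht2
        · exact hdisj1 _ ht1 _ (List.mem_append_right _ ht2) rfl
    have hPe : s(b, a) ∉ (q1.append (arc.append q2)).edges := by
      rw [show s(b, a) = s(a, b) from Sym2.eq_swap]
      rw [Walk.edges_append, Walk.edges_append]
      intro hmem
      rw [List.mem_append] at hmem
      rcases hmem with hmem | hmem
      · exact hpe (hq1e _ hmem)
      · rw [List.mem_append] at hmem
        rcases hmem with hmem | hmem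
        · exact harcE hmem
        · exact hpe (hq2e _ hmem)
    have hW : (Walk.cons hab.symm (q1.append (arc.append q2))).IsCycle :=
      (Walk.cons_isCycle_iff _ hab.symm).mpr ⟨hPpath, hPe⟩
    have hmem : s(a, b) ∈ (Walk.cons hab.symm (q1.append (arc.append q2))).edges.toFinset := by
      rw [List.mem_toFinset, Walk.edges_cons, show s(b, a) = s(a, b) from Sym2.eq_swap]
      exact List.mem_cons_self
    have hneg := hNeg _ ⟨b, _, hW, rfl⟩ hmem
    rw [esign_toFinset hW.isCircuit.isTrail.edges_nodup] at hneg
    rwa [wsign_cons, wsign_append, wsign_append] at hneg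
  have E1 := mk A1 hA1path hA1sub hA1ne
  have E2 := mk A2.reverse hA2path.reverse
    (by intro t ht
        rw [Walk.support_reverse, List.mem_reverse] at ht
        exact hA2sub t ht)
    (by rw [Walk.edges_reverse, List.mem_reverse]; exact hA2ne)
  have hc'sign : wsign σ c' = wsign σ A1 * wsign σ A2 := by rw [← harc, wsign_append]
  calc wsign σ c = wsign σ c' := (wsign_rotate c hxC).symm
    _ = wsign σ A1 * wsign σ A2.reverse := by rw [hc'sign, wsign_reverse]
    _ = (σ s(b, a) * (wsign σ q1 * (wsign σ A1 * wsign σ q2))) *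
        (σ s(b, a) * (wsign σ q1 * (wsign σ A2.reverse * wsign σ q2))) :=
          (units_aux1 _ _ _ _ _).symm
    _ = (-1) * (-1) := by rw [E1, E2]
    _ = 1 := by decide

end Core
section Assembly

open SimpleGraph Walk

set_option linter.unusedSectionVars false

variable {V : Type*} [DecidableEq V]

lemma mem_blockOf_edgeSet {G : SimpleGraph V} {e f : Sym2 V} (hfG : f ∈ G.edgeSet)
    (t : Finset (Sym2 V)) (ht : IsCircleOf G t) (het : e ∈ t) (hft : f ∈ t) :
    f ∈ (blockOf G e).edgeSet := by
  revert hfG hft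
  induction f using Sym2.ind with
  | _ x y =>
  intro hfG hft
  rw [SimpleGraph.mem_edgeSet] at hfG ⊢
  exact ⟨hfG, Or.inr ⟨t, ht, het, hft⟩⟩

lemma blockOf_edgeSet_sub {G : SimpleGraph V} {e f : Sym2 V}
    (hf : f ∈ (blockOf G e).edgeSet) : f ∈ G.edgeSet := by
  revert hf
  induction f using Sym2.ind with
  | _ x y =>
  intro hf
  rw [SimpleGraph.mem_edgeSet] at hf ⊢
  exact hf.1

lemma exists_H'_path {G : SimpleGraph V} {σ : Sym2 V → ℤˣ} {a b z : V}
    (hNeg : ∀ s, IsCircleOf G s → s(a, b) ∈ s → esign σ s = -1)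
    {d : G.Walk z z} (hd : d.IsCycle) (hed : s(a, b) ∈ d.edges) :
    ∃ P : ((blockOf G s(a, b)).deleteEdges {s(a, b)}).Walk a b,
      P.IsPath ∧ s(a, b) ∉ P.edges ∧ (∀ f ∈ d.edges, f ≠ s(a, b) → f ∈ P.edges) ∧
      σ s(b, a) * wsign σ P = -1 := by
  have hab : G.Adj a b := d.adj_of_mem_edges hed
  obtain ⟨p, hp_path, hpe, hp_sub, hp_cov⟩ := cycle_to_path hd hed
  have hsub : ∀ g ∈ p.edges, g ∈ ((blockOf G s(a, b)).deleteEdges {s(a, b)}).edgeSet := by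
    intro g hg
    rw [SimpleGraph.edgeSet_deleteEdges]
    constructor
    · exact mem_blockOf_edgeSet (p.edges_subset_edgeSet hg) d.edges.toFinset
        ⟨z, d, hd, rfl⟩ (List.mem_toFinset.mpr hed) (List.mem_toFinset.mpr (hp_sub g hg))
    · intro hmem
      rw [Set.mem_singleton_iff] at hmem
      subst hmem
      exact hpe hg
  refine ⟨p.transfer _ hsub, hp_path.transfer hsub, ?_, ?_, ?_⟩
  · rw [Walk.edges_transfer]
    exact hpe
  · intro f hf hne
    rw [Walk.edges_transfer]
    exact hp_cov f hf hne
  · have hrevP : p.reverse.IsPath := hp_path.reverse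
    have hrevE : s(a, b) ∉ p.reverse.edges := by
      rw [Walk.edges_reverse, List.mem_reverse]
      exact hpe
    have hW : (Walk.cons hab p.reverse).IsCycle :=
      (Walk.cons_isCycle_iff _ hab).mpr ⟨hrevP, hrevE⟩
    have hmem : s(a, b) ∈ (Walk.cons hab p.reverse).edges.toFinset := by
      rw [List.mem_toFinset, Walk.edges_cons]
      exact List.mem_cons_self
    have hneg := hNeg _ ⟨a, _, hW, rfl⟩ hmem
    rw [esign_toFinset hW.isCircuit.isTrail.edges_nodup, wsign_cons, wsign_reverse] at hneg
    have hws : wsign σ (p.transfer _ hsub) = wsign σ p := by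
      unfold wsign
      rw [Walk.edges_transfer]
    rw [hws, show s(b, a) = s(a, b) from Sym2.eq_swap]
    exact hneg

lemma H'_cycles_pos {G : SimpleGraph V} {σ : Sym2 V → ℤˣ} {a b : V}
    (hNeg : ∀ s, IsCircleOf G s → s(a, b) ∈ s → esign σ s = -1) :
    ∀ (x : V) (c : ((blockOf G s(a, b)).deleteEdges {s(a, b)}).Walk x x), c.IsCycle →
      wsign σ c = 1 := by
  intro x c hcyc
  have hsub : ∀ g ∈ c.edges, g ∈ G.edgeSet := by
    intro g hg
    have h3 := c.edges_subset_edgeSet hg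
    rw [SimpleGraph.edgeSet_deleteEdges] at h3
    exact blockOf_edgeSet_sub h3.1
  have hcg : (c.transfer G hsub).IsCycle := hcyc.transfer hsub
  have hce : s(a, b) ∉ (c.transfer G hsub).edges := by
    rw [Walk.edges_transfer]
    intro hmem
    have h3 := c.edges_subset_edgeSet hmem
    rw [SimpleGraph.edgeSet_deleteEdges] at h3
    exact h3.2 rfl
  obtain ⟨y, hadj, q, hqe⟩ := Walk.not_nil_iff.mp hcyc.not_nil
  have hxyH : s(x, y) ∈ c.edges := by
    rw [hqe, Walk.edges_cons]
    exact List.mem_cons_self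
  have hxyE := c.edges_subset_edgeSet hxyH
  rw [SimpleGraph.edgeSet_deleteEdges] at hxyE
  have hne : s(x, y) ≠ s(a, b) := fun h => hxyE.2 (by rw [h]; rfl)
  have hblk : (blockOf G s(a, b)).Adj x y := by
    have := hxyE.1
    rwa [SimpleGraph.mem_edgeSet] at this
  rcases hblk.2 with heq | ⟨t, ht, het, hft⟩
  · exact absurd heq hne
  · obtain ⟨z', d, hdc, rfl⟩ := ht
    have hfcg : s(x, y) ∈ (c.transfer G hsub).edges := by
      rw [Walk.edges_transfer]
      exact hxyH
    have h4 : wsign σ (c.transfer G hsub) = 1 :=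
      lemA hNeg hcg hce hfcg hdc (List.mem_toFinset.mp het) (List.mem_toFinset.mp hft)
    have h5 : wsign σ c = wsign σ (c.transfer G hsub) := by
      unfold wsign
      rw [Walk.edges_transfer]
    rw [h5, h4]

end Assembly

theorem only_negative_circles_iff_balancing_in_block {V : Type*} [DecidableEq V]
    (G : SimpleGraph V) (σ : Sym2 V → ℤˣ) (e : Sym2 V)
    (he : ∃ s : Finset (Sym2 V), IsCircleOf G s ∧ e ∈ s) :
    (∀ s : Finset (Sym2 V), IsCircleOf G s → e ∈ s → esign σ s = -1) ↔
      IsBalancingEdge (blockOf G e) σ e := by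
  classical
  revert he
  induction e using Sym2.ind with
  | _ a b =>
  intro he
  constructor
  · -- forward direction
    intro hNeg
    obtain ⟨s0, hs0, hes0⟩ := he
    obtain ⟨z0, w0, hw0, rfl⟩ := hs0
    have he0 : s(a, b) ∈ w0.edges := List.mem_toFinset.mp hes0
    have habG : G.Adj a b := w0.adj_of_mem_edges he0
    refine ⟨?_, ?_⟩
    · rw [SimpleGraph.mem_edgeSet]
      exact ⟨habG, Or.inr ⟨_, ⟨z0, w0, hw0, rfl⟩, hes0, hes0⟩⟩
    · have hcyc := H'_cycles_pos (σ := σ) hNeg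
      have uniq : ∀ {u v : V}
          (p q : ((blockOf G s(a, b)).deleteEdges {s(a, b)}).Walk u v),
          wsign σ p = wsign σ q := fun p q => wsign_unique hcyc p q
      obtain ⟨P0, hP0path, hP0e, hP0cov, hP0neg⟩ := exists_H'_path (σ := σ) hNeg hw0 he0
      refine ⟨fun v =>
        if h : ((blockOf G s(a, b)).deleteEdges {s(a, b)}).Reachable a v
        then wsign σ h.some else 1, ?_⟩
      have hζ : ∀ {v : V} (w : ((blockOf G s(a, b)).deleteEdges {s(a, b)}).Walk a v),
          (if h : ((blockOf G s(a, b)).deleteEdges {s(a, b)}).Reachable a v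
            then wsign σ h.some else 1) = wsign σ w := by
        intro v w
        rw [dif_pos ⟨w⟩]
        exact uniq _ w
      intro f hf
      revert hf
      induction f using Sym2.ind with
      | _ x y =>
      intro hf
      rw [SimpleGraph.mem_edgeSet] at hf
      by_cases hfe : s(x, y) = s(a, b)
      · refine iff_of_true ?_ hfe
        have hza := hζ Walk.nil
        have hzb := hζ P0
        have hP0neg' : σ s(a, b) * wsign σ P0 = -1 := by
          rwa [show s(b, a) = s(a, b) from Sym2.eq_swap] at hP0neg
        rw [hfe, switchSign_mk, hza, hzb, wsign_nil, one_mul]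
        exact hP0neg'
      · refine iff_of_false ?_ hfe
        rcases hf.2 with heq | ⟨t, ht, het, hft⟩
        · exact absurd heq hfe
        obtain ⟨z', d, hd, rfl⟩ := ht
        obtain ⟨P1, hP1path, hP1e, hP1cov, _⟩ :=
          exists_H'_path (σ := σ) hNeg hd (List.mem_toFinset.mp het)
        have hfp1 : s(x, y) ∈ P1.edges := hP1cov _ (List.mem_toFinset.mp hft) hfe
        have hxs : x ∈ P1.support := P1.fst_mem_support_of_mem_edges hfp1
        have hadjH : ((blockOf G s(a, b)).deleteEdges {s(a, b)}).Adj x y := by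
          have := P1.edges_subset_edgeSet hfp1
          rwa [SimpleGraph.mem_edgeSet] at this
        have hzx := hζ (P1.takeUntil x hxs)
        have hzy := hζ ((P1.takeUntil x hxs).append (Walk.cons hadjH Walk.nil))
        intro hm
        rw [switchSign_mk, hzx, hzy, wsign_append, wsign_cons, wsign_nil] at hm
        have hval : wsign σ (P1.takeUntil x hxs) * σ s(x, y) *
            (wsign σ (P1.takeUntil x hxs) * (σ s(x, y) * 1)) = 1 := by
          have h6 : wsign σ (P1.takeUntil x hxs) * σ s(x, y) *
              (wsign σ (P1.takeUntil x hxs) * (σ s(x, y) * 1)) =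
              (wsign σ (P1.takeUntil x hxs) * wsign σ (P1.takeUntil x hxs)) *
              (σ s(x, y) * σ s(x, y)) := by
            refine Units.ext ?_
            simp only [Units.val_mul, Units.val_one]
            ring
          rw [h6, Int.units_mul_self, Int.units_mul_self, one_mul]
        rw [hval] at hm
        exact absurd hm (by decide)
  · -- backward direction
    rintro ⟨heB, ζ, hζ⟩ s hs hes
    obtain ⟨z, w, hw, rfl⟩ := hs
    have hesw : s(a, b) ∈ w.edges := List.mem_toFinset.mp hes
    have hnd : w.edges.Nodup := hw.isCircuit.isTrail.edges_nodup
    rw [esign_toFinset hnd]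
    have hswp : ∀ {u' v' : V} (q : G.Walk u' v'),
        wsign (switchSign σ ζ) q = ζ u' * wsign σ q * ζ v' := by
      intro u' v' q
      induction q with
      | nil =>
        rw [wsign_nil, wsign_nil, mul_one, Int.units_mul_self]
      | cons h q ihq =>
        rename_i c1 c2 c3
        rw [wsign_cons, wsign_cons, ihq, switchSign_mk]
        have h6 : ζ c1 * σ s(c1, c2) * ζ c2 * (ζ c2 * wsign σ q * ζ c3) =
            (ζ c2 * ζ c2) * (ζ c1 * (σ s(c1, c2) * wsign σ q) * ζ c3) := by
          refine Units.ext ?_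
          simp only [Units.val_mul, Units.val_one]
          ring
        rw [h6, Int.units_mul_self, one_mul]
    have h1 := hswp w
    have h2 : wsign (switchSign σ ζ) w = -1 := by
      have hval : ∀ f ∈ w.edges, switchSign σ ζ f = if f = s(a, b) then -1 else 1 := by
        intro f hfw
        have hfB : f ∈ (blockOf G s(a, b)).edgeSet :=
          mem_blockOf_edgeSet (w.edges_subset_edgeSet hfw) _ ⟨z, w, hw, rfl⟩ hes
            (List.mem_toFinset.mpr hfw)
        have h5 := hζ f hfB
        by_cases hfe : f = s(a, b)
        · rw [if_pos hfe]
          exact h5.mpr hfe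
        · rw [if_neg hfe]
          rcases Int.units_eq_one_or (switchSign σ ζ f) with h | h
          · exact h
          · exact absurd (h5.mp h) hfe
      have hgen : ∀ (l : List (Sym2 V)),
          (∀ f ∈ l, switchSign σ ζ f = if f = s(a, b) then -1 else 1) →
          (l.map (switchSign σ ζ)).prod = (-1) ^ (l.count (s(a, b))) := by
        intro l
        induction l with
        | nil => intro _; simp
        | cons g l ihl =>
          intro hl
          rw [List.map_cons, List.prod_cons,
            ihl (fun f hf => hl f (List.mem_cons_of_mem _ hf)),
            hl g (List.mem_cons_self)]
          by_cases hg : g = s(a, b)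
          · subst hg
            rw [if_pos rfl, List.count_cons_self, pow_succ, mul_comm]
          · rw [if_neg hg, List.count_cons_of_ne (by exact fun h => hg h), one_mul]
      have hcnt1 : w.edges.count (s(a, b)) = 1 := List.count_eq_one_of_mem hnd hesw
      unfold wsign
      rw [hgen w.edges hval, hcnt1, pow_one]
    rw [h1] at h2
    have h7 : ζ z * wsign σ w * ζ z = (ζ z * ζ z) * wsign σ w := by
      refine Units.ext ?_
      simp only [Units.val_mul, Units.val_one]
      ring
    rw [h7, Int.units_mul_self, one_mul] at h2
    exact h2
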